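/- arXiv:1810.02024 — 6 statements merged into one kernel-verified Lean document; each statement's English description precedes it below -/
import Mathlib

section
/- Let f : ℝⁿ → ℝ be twice continuously differentiable and let F ⊆ ℝⁿ be a nonempty closed convex set. Then the first-order stationarity measure X(x) = |min { ⟨∇f(x), s⟩ : x + s ∈ F, ‖s‖ ≤ 1 }| is a continuous function of x on F. -/
open scoped RealInnerProductSpace

/-- First-order stationarity measure
`X(x) = |min { ⟨∇f(x), s⟩ : x + s ∈ F, ‖s‖ ≤ 1 }|`. -/
noncomputable def Xmeas {n : ℕ} (f : EuclideanSpace ℝ (Fin n) → ℝ)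
    (F : Set (EuclideanSpace ℝ (Fin n))) (x : EuclideanSpace ℝ (Fin n)) : ℝ :=
  |sInf {v : ℝ | ∃ s : EuclideanSpace ℝ (Fin n),
      x + s ∈ F ∧ ‖s‖ ≤ 1 ∧ v = ⟪gradient f x, s⟫}|

noncomputable def Tset {n : ℕ} (f : EuclideanSpace ℝ (Fin n) → ℝ)
    (F : Set (EuclideanSpace ℝ (Fin n))) (x : EuclideanSpace ℝ (Fin n)) : Set ℝ :=
  {v : ℝ | ∃ s : EuclideanSpace ℝ (Fin n),
      x + s ∈ F ∧ ‖s‖ ≤ 1 ∧ v = ⟪gradient f x, s⟫}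

lemma Tset_nonempty {n : ℕ} (f : EuclideanSpace ℝ (Fin n) → ℝ)
    (F : Set (EuclideanSpace ℝ (Fin n))) {x} (hx : x ∈ F) : (Tset f F x).Nonempty :=
  ⟨0, 0, by simp [hx]⟩

lemma Tset_bddBelow {n : ℕ} (f : EuclideanSpace ℝ (Fin n) → ℝ)
    (F : Set (EuclideanSpace ℝ (Fin n))) (x) : BddBelow (Tset f F x) := by
  refine ⟨-‖gradient f x‖, ?_⟩
  rintro v ⟨s, -, hs, rfl⟩
  have h1 := abs_real_inner_le_norm (gradient f x) s
  have h2 : ‖gradient f x‖ * ‖s‖ ≤ ‖gradient f x‖ * 1 :=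
    mul_le_mul_of_nonneg_left hs (norm_nonneg _)
  have h3 := (abs_le.mp (h1.trans (by linarith))).1
  linarith

lemma Tset_key {n : ℕ} (f : EuclideanSpace ℝ (Fin n) → ℝ)
    (F : Set (EuclideanSpace ℝ (Fin n))) (hFconv : Convex ℝ F)
    {x y} (hx : x ∈ F) (hy : y ∈ F) :
    sInf (Tset f F x) ≤ sInf (Tset f F y)
      + ‖gradient f x - gradient f y‖ + 2 * ‖gradient f x‖ * ‖x - y‖ := by
  set gx := gradient f x with hgx
  set gy := gradient f y with hgy
  set d := ‖x - y‖ with hd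
  have hd0 : 0 ≤ d := norm_nonneg _
  rw [show sInf (Tset f F y) + ‖gx - gy‖ + 2*‖gx‖*d
      = sInf (Tset f F y) + (‖gx - gy‖ + 2*‖gx‖*d) by ring, ← sub_le_iff_le_add]
  apply le_csInf (Tset_nonempty f F hy)
  rintro v ⟨s, hzF, hs1, rfl⟩
  rw [sub_le_iff_le_add]
  set z := y + s with hz
  have h1d : (0:ℝ) < 1 + d := by linarith
  set t : ℝ := (1 + d)⁻¹ with ht
  have ht0 : 0 ≤ t := by positivity
  have htd : t * (1 + d) = 1 := inv_mul_cancel₀ (ne_of_gt h1d)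
  have ht1 : t ≤ 1 := by nlinarith
  set s' := t • (z - x) with hs'
  have hzx : ‖z - x‖ ≤ 1 + d := by
    calc ‖z - x‖ = ‖s + (y - x)‖ := by rw [hz]; congr 1; abel
    _ ≤ ‖s‖ + ‖y - x‖ := norm_add_le _ _
    _ ≤ 1 + d := by rw [norm_sub_rev] at hd; linarith
  have hmem : x + s' ∈ F := by
    have h := hFconv hx hzF (by linarith : (0:ℝ) ≤ 1 - t) ht0 (by ring)
    have he : x + s' = (1 - t) • x + t • z := by rw [hs']; module
    rw [he]; exact h
  have hnorm : ‖s'‖ ≤ 1 := by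
    rw [hs', norm_smul, Real.norm_eq_abs, abs_of_nonneg ht0]
    calc t * ‖z - x‖ ≤ t * (1 + d) := mul_le_mul_of_nonneg_left hzx ht0
    _ = 1 := htd
  have hle : sInf (Tset f F x) ≤ ⟪gx, s'⟫ :=
    csInf_le (Tset_bddBelow f F x) ⟨s', hmem, hnorm, rfl⟩
  refine hle.trans ?_
  have hss' : ‖s' - s‖ ≤ 2 * d := by
    have heq : s' - s = (t - 1) • (z - x) - (x - y) := by
      rw [hs', hz]; module
    rw [heq]
    calc ‖(t-1) • (z-x) - (x-y)‖ ≤ ‖(t-1) • (z-x)‖ + ‖x-y‖ := norm_sub_le _ _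
    _ = (1 - t) * ‖z - x‖ + d := by
        rw [norm_smul, Real.norm_eq_abs, abs_of_nonpos (by linarith : t - 1 ≤ 0), ← hd]; ring
    _ ≤ 2 * d := by nlinarith [mul_le_mul_of_nonneg_left hzx (by linarith : (0:ℝ) ≤ 1 - t)]
  have hinner : ⟪gx, s'⟫ = ⟪gy, s⟫ + ⟪gx - gy, s⟫ + ⟪gx, s' - s⟫ := by
    simp only [inner_sub_left, inner_sub_right]; ring
  rw [hinner]
  have e1 : ⟪gx - gy, s⟫ ≤ ‖gx - gy‖ := by
    have := real_inner_le_norm (gx - gy) s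
    nlinarith [norm_nonneg (gx - gy)]
  have e2 : ⟪gx, s' - s⟫ ≤ 2 * ‖gx‖ * d := by
    have h := real_inner_le_norm gx (s' - s)
    nlinarith [norm_nonneg gx, norm_nonneg (s' - s)]
  linarith

theorem stmt_0 {n : ℕ} (f : EuclideanSpace ℝ (Fin n) → ℝ) (hf : ContDiff ℝ 2 f)
    (F : Set (EuclideanSpace ℝ (Fin n))) (hFne : F.Nonempty) (hFcl : IsClosed F)
    (hFconv : Convex ℝ F) :
    ContinuousOn (Xmeas f F) F := by
  have hgrad : Continuous fun x => gradient f x := by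
    have h1 : Continuous (fderiv ℝ f) := hf.continuous_fderiv (by norm_num)
    exact (InnerProductSpace.toDual ℝ _).symm.continuous.comp h1
  have hg : ContinuousOn (fun x => sInf (Tset f F x)) F := by
    intro x₀ hx₀
    rw [Metric.continuousWithinAt_iff]
    intro ε hε
    set φ := fun x => gradient f x with hφ
    obtain ⟨δ₁, hδ₁pos, hδ₁⟩ := Metric.continuous_iff.mp hgrad x₀ (min 1 (ε/4)) (by positivity)
    refine ⟨min δ₁ (ε / (4 * (‖φ x₀‖ + 1))), by positivity, ?_⟩
    intro x hxF hxd
    have hA := hδ₁ x (lt_of_lt_of_le hxd (min_le_left _ _))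
    rw [dist_eq_norm] at hA
    rw [dist_eq_norm] at hxd
    rw [Real.dist_eq]
    have key1 := Tset_key f F hFconv hxF hx₀
    have key2 := Tset_key f F hFconv hx₀ hxF
    rw [norm_sub_rev x₀ x, norm_sub_rev (gradient f x₀) (gradient f x)] at key2
    have hAlt : ‖φ x - φ x₀‖ < min 1 (ε/4) := hA
    have hphib : ‖φ x‖ ≤ ‖φ x₀‖ + ‖φ x - φ x₀‖ := by
      have := norm_sub_norm_le (φ x) (φ x₀); linarith
    have hD : ‖x - x₀‖ < ε / (4 * (‖φ x₀‖ + 1)) :=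
      lt_of_lt_of_le hxd (min_le_right _ _)
    have hc : (0:ℝ) < 4 * (‖φ x₀‖ + 1) := by positivity
    have hD2 : ‖x - x₀‖ * (4 * (‖φ x₀‖ + 1)) < ε := (lt_div_iff₀ hc).mp hD
    have hA1 : ‖φ x - φ x₀‖ < 1 := lt_of_lt_of_le hAlt (min_le_left _ _)
    have hA4 : ‖φ x - φ x₀‖ < ε/4 := lt_of_lt_of_le hAlt (min_le_right _ _)
    rw [abs_sub_lt_iff]
    have hDn : (0:ℝ) ≤ ‖x - x₀‖ := norm_nonneg _
    constructor
    · nlinarith [norm_nonneg (φ x₀)]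
    · nlinarith [norm_nonneg (φ x₀)]
  have heq : Xmeas f F = fun x => |sInf (Tset f F x)| := rfl
  rw [heq]
  exact continuous_abs.comp_continuousOn hg
end

section
/- Let f : ℝⁿ → ℝ be twice continuously differentiable, F ⊆ ℝⁿ nonempty closed convex, and x̄ ∈ F. Then X(x̄) = 0 and ψ(x̄) = 0 if and only if x̄ is a second-order stationary point of min_{x ∈ F} f(x), i.e., ⟨∇f(x̄), x − x̄⟩ ≥ 0 for all x ∈ F, and dᵀ∇²f(x̄)d ≥ 0 for every d with ⟨∇f(x̄), d⟩ = 0 and x̄ + d ∈ F. -/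
open scoped RealInnerProductSpace

/-- Second-order stationarity measure
`ψ(x) = |min { dᵀ∇²f(x)d : x + d ∈ F, ‖d‖ ≤ 1, ⟨∇f(x), d⟩ ≤ 0 }|`. -/
noncomputable def psiMeas {n : ℕ} (f : EuclideanSpace ℝ (Fin n) → ℝ)
    (F : Set (EuclideanSpace ℝ (Fin n))) (x : EuclideanSpace ℝ (Fin n)) : ℝ :=
  |sInf {v : ℝ | ∃ d : EuclideanSpace ℝ (Fin n),
      x + d ∈ F ∧ ‖d‖ ≤ 1 ∧ ⟪gradient f x, d⟫ ≤ 0 ∧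
        v = iteratedFDeriv ℝ 2 f x ![d, d]}|

lemma aux_smul {n : ℕ} (A : ContinuousMultilinearMap ℝ (fun _ : Fin 2 => EuclideanSpace ℝ (Fin n)) ℝ)
    (t : ℝ) (d : EuclideanSpace ℝ (Fin n)) :
    A ![t • d, t • d] = (t * t) * A ![d, d] := by
  have h : ![t • d, t • d] = fun i => (fun _ : Fin 2 => t) i • ![d, d] i := by
    funext i; fin_cases i <;> rfl
  rw [h, A.map_smul_univ]
  rw [Fin.prod_univ_two, smul_eq_mul]

lemma aux_zero {n : ℕ} (A : ContinuousMultilinearMap ℝ (fun _ : Fin 2 => EuclideanSpace ℝ (Fin n)) ℝ) :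
    A ![(0 : EuclideanSpace ℝ (Fin n)), 0] = 0 :=
  A.map_coord_zero (m := ![(0 : EuclideanSpace ℝ (Fin n)), 0]) (0 : Fin 2) rfl


theorem stmt_3 {n : ℕ} (f : EuclideanSpace ℝ (Fin n) → ℝ) (hf : ContDiff ℝ 2 f)
    (F : Set (EuclideanSpace ℝ (Fin n))) (hFne : F.Nonempty) (hFcl : IsClosed F)
    (hFconv : Convex ℝ F) (xb : EuclideanSpace ℝ (Fin n)) (hxb : xb ∈ F) :
    (Xmeas f F xb = 0 ∧ psiMeas f F xb = 0) ↔
      ((∀ x ∈ F, 0 ≤ ⟪gradient f xb, x - xb⟫) ∧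
        (∀ d : EuclideanSpace ℝ (Fin n), ⟪gradient f xb, d⟫ = 0 → xb + d ∈ F →
          0 ≤ iteratedFDeriv ℝ 2 f xb ![d, d])) := by
  set g := gradient f xb with hg
  set A := iteratedFDeriv ℝ 2 f xb with hA
  set S₁ : Set ℝ := {v : ℝ | ∃ s : EuclideanSpace ℝ (Fin n),
      xb + s ∈ F ∧ ‖s‖ ≤ 1 ∧ v = ⟪g, s⟫} with hS₁
  set S₂ : Set ℝ := {v : ℝ | ∃ d : EuclideanSpace ℝ (Fin n),
      xb + d ∈ F ∧ ‖d‖ ≤ 1 ∧ ⟪g, d⟫ ≤ 0 ∧ v = A ![d, d]} with hS₂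
  have hX : Xmeas f F xb = |sInf S₁| := rfl
  have hP : psiMeas f F xb = |sInf S₂| := rfl
  have h0S₁ : (0 : ℝ) ∈ S₁ := ⟨0, by simpa using hxb, by simp, by simp⟩
  have h0S₂ : (0 : ℝ) ∈ S₂ :=
    ⟨0, by simpa using hxb, by simp, by simp, by rw [aux_zero]⟩
  have hbd1 : BddBelow S₁ := by
    refine ⟨-‖g‖, ?_⟩
    rintro v ⟨s, _, hs1, rfl⟩
    have h1 : |⟪g, s⟫| ≤ ‖g‖ * ‖s‖ := abs_real_inner_le_norm g s
    have h2 : ‖g‖ * ‖s‖ ≤ ‖g‖ * 1 := mul_le_mul_of_nonneg_left hs1 (norm_nonneg g)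
    have := neg_abs_le ⟪g, s⟫
    nlinarith
  have hbd2 : BddBelow S₂ := by
    refine ⟨-‖A‖, ?_⟩
    rintro v ⟨d, _, hd1, _, rfl⟩
    have h1 : ‖A ![d, d]‖ ≤ ‖A‖ * ∏ i : Fin 2, ‖(![d, d] : Fin 2 → _) i‖ :=
      A.le_opNorm ![d, d]
    have h2 : (∏ i : Fin 2, ‖(![d, d] : Fin 2 → _) i‖) = ‖d‖ * ‖d‖ := by
      simp [Fin.prod_univ_two]
    rw [h2] at h1
    have h3 : ‖d‖ * ‖d‖ ≤ 1 := by nlinarith [norm_nonneg d]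
    have h4 : ‖A‖ * (‖d‖ * ‖d‖) ≤ ‖A‖ * 1 := mul_le_mul_of_nonneg_left h3 (norm_nonneg A)
    have h5 := neg_abs_le (A ![d, d])
    have h6 : |A ![d, d]| = ‖A ![d, d]‖ := rfl
    nlinarith
  constructor
  · rintro ⟨hXz, hPz⟩
    rw [hX, abs_eq_zero] at hXz
    rw [hP, abs_eq_zero] at hPz
    have key1 : ∀ s : EuclideanSpace ℝ (Fin n), xb + s ∈ F → ‖s‖ ≤ 1 → 0 ≤ ⟪g, s⟫ := by
      intro s hs hns
      have := csInf_le hbd1 (⟨s, hs, hns, rfl⟩ : (⟪g, s⟫ : ℝ) ∈ S₁)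
      linarith [hXz ▸ this]
    have key2 : ∀ d : EuclideanSpace ℝ (Fin n), xb + d ∈ F → ‖d‖ ≤ 1 → ⟪g, d⟫ ≤ 0 →
        0 ≤ A ![d, d] := by
      intro d hd hnd hgd
      have := csInf_le hbd2 (⟨d, hd, hnd, hgd, rfl⟩ : (A ![d, d] : ℝ) ∈ S₂)
      linarith [hPz ▸ this]
    constructor
    · intro x hx
      rcases eq_or_ne x xb with h | h
      · simp [h]
      · have hd0 : (0 : ℝ) < ‖x - xb‖ := by
          rw [norm_pos_iff]; exact sub_ne_zero_of_ne h
        set t : ℝ := min 1 (1 / ‖x - xb‖) with ht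
        have ht0 : 0 < t := lt_min one_pos (by positivity)
        have ht1 : t ≤ 1 := min_le_left _ _
        have hmem : xb + t • (x - xb) ∈ F := by
          have heq : xb + t • (x - xb) = (1 - t) • xb + t • x := by module
          rw [heq]
          exact hFconv hxb hx (by linarith : (0:ℝ) ≤ 1 - t) ht0.le (by ring)
        have hnorm : ‖t • (x - xb)‖ ≤ 1 := by
          rw [norm_smul, Real.norm_eq_abs, abs_of_pos ht0]
          have : t ≤ 1 / ‖x - xb‖ := min_le_right _ _
          calc t * ‖x - xb‖ ≤ (1 / ‖x - xb‖) * ‖x - xb‖ :=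
                mul_le_mul_of_nonneg_right this (norm_nonneg _)
            _ = 1 := by field_simp
        have := key1 _ hmem hnorm
        rw [real_inner_smul_right] at this
        exact le_of_mul_le_mul_left (by rw [mul_zero]; exact this) ht0
    · intro d hgd hd
      rcases eq_or_ne d 0 with h | h
      · subst h; rw [aux_zero]
      · have hd0 : (0 : ℝ) < ‖d‖ := norm_pos_iff.mpr h
        set t : ℝ := min 1 (1 / ‖d‖) with ht
        have ht0 : 0 < t := lt_min one_pos (by positivity)
        have ht1 : t ≤ 1 := min_le_left _ _
        have hmem : xb + t • d ∈ F := by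
          have heq : xb + t • d = (1 - t) • xb + t • (xb + d) := by module
          rw [heq]
          exact hFconv hxb hd (by linarith : (0:ℝ) ≤ 1 - t) ht0.le (by ring)
        have hnorm : ‖t • d‖ ≤ 1 := by
          rw [norm_smul, Real.norm_eq_abs, abs_of_pos ht0]
          have : t ≤ 1 / ‖d‖ := min_le_right _ _
          calc t * ‖d‖ ≤ (1 / ‖d‖) * ‖d‖ :=
                mul_le_mul_of_nonneg_right this (norm_nonneg _)
            _ = 1 := by field_simp
        have hgd' : ⟪g, t • d⟫ ≤ 0 := by
          rw [real_inner_smul_right, hgd, mul_zero]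
        have := key2 _ hmem hnorm hgd'
        rw [aux_smul] at this
        exact le_of_mul_le_mul_left (by rw [mul_zero]; exact this) (mul_pos ht0 ht0)
  · rintro ⟨h1, h2⟩
    have lb1 : ∀ v ∈ S₁, (0 : ℝ) ≤ v := by
      rintro v ⟨s, hs, _, rfl⟩
      have := h1 _ hs
      simpa using this
    have lb2 : ∀ v ∈ S₂, (0 : ℝ) ≤ v := by
      rintro v ⟨d, hd, _, hgd, rfl⟩
      have hge : 0 ≤ ⟪g, d⟫ := by
        have := h1 _ hd
        simpa using this
      exact h2 d (le_antisymm hgd hge) hd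
    constructor
    · rw [hX, abs_eq_zero]
      exact le_antisymm (csInf_le hbd1 h0S₁) (le_csInf ⟨0, h0S₁⟩ lb1)
    · rw [hP, abs_eq_zero]
      exact le_antisymm (csInf_le hbd2 h0S₂) (le_csInf ⟨0, h0S₂⟩ lb2)
end

section
/- Let G = (V, E) be a simple graph with |V| = n ≥ 1 vertices, let A_G be its adjacency matrix, let t be a positive integer with t ≤ n, let Q = (t − 1/2)(Iₙ + A_G) − 1ₙ (where Iₙ is the n×n identity matrix and 1ₙ is the n×n all-ones matrix), and let δ = 1/(2n+1). Then the following are equivalent: (i) there exists x ∈ ℝⁿ with x ≥ 0 componentwise and ‖x‖₂ ≤ 1 such that xᵀQx ≤ −δ/√n; (ii) G contains a stable (independent) set of size t. -/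
open Matrix Finset

section aux

variable {n : ℕ} (G : SimpleGraph (Fin n)) [DecidableRel G.Adj]

private lemma symm_form (M : Matrix (Fin n) (Fin n) ℝ) (hM : Mᵀ = M) (x y : Fin n → ℝ) :
    x ⬝ᵥ M.mulVec y = y ⬝ᵥ M.mulVec x := by
  rw [dotProduct_mulVec, ← mulVec_transpose, hM, dotProduct_comm]

private lemma expand_form (M : Matrix (Fin n) (Fin n) ℝ) (hM : Mᵀ = M) (x d : Fin n → ℝ) (c : ℝ) :
    (x + c • d) ⬝ᵥ M.mulVec (x + c • d)
      = x ⬝ᵥ M.mulVec x + 2*c*(d ⬝ᵥ M.mulVec x) + c^2 * (d ⬝ᵥ M.mulVec d) := by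
  have h := symm_form M hM x d
  simp only [mulVec_add, mulVec_smul, dotProduct_add, add_dotProduct, dotProduct_smul,
    smul_dotProduct, smul_eq_mul]
  rw [h]; ring

private lemma adj_part_nonneg (x : Fin n → ℝ) (hx : ∀ i, 0 ≤ x i) :
    0 ≤ x ⬝ᵥ (G.adjMatrix ℝ).mulVec x := by
  simp only [mulVec, dotProduct]
  apply Finset.sum_nonneg
  intro i _
  apply mul_nonneg (hx i)
  apply Finset.sum_nonneg
  intro j _
  by_cases h : G.Adj i j <;> simp [h, hx j]

private lemma sumsq_le_form (x : Fin n → ℝ) (hx : ∀ i, 0 ≤ x i) :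
    ∑ i, x i ^ 2 ≤ x ⬝ᵥ (1 + G.adjMatrix ℝ).mulVec x := by
  have h0 := adj_part_nonneg G x hx
  have : x ⬝ᵥ (1 + G.adjMatrix ℝ).mulVec x
      = ∑ i, x i ^ 2 + x ⬝ᵥ (G.adjMatrix ℝ).mulVec x := by
    simp [add_mulVec, dotProduct_add, one_mulVec, dotProduct, sq, mul_add, Finset.sum_add_distrib]
  linarith

private lemma ms_key (a : ℕ)
    (ha : ∀ S : Finset (Fin n), (∀ i ∈ S, ∀ j ∈ S, ¬ G.Adj i j) → S.card ≤ a)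
    (x : Fin n → ℝ) (hx : ∀ i, 0 ≤ x i) :
    (∑ i, x i) ^ 2 ≤ a * (x ⬝ᵥ (1 + G.adjMatrix ℝ).mulVec x) := by
  set M : Matrix (Fin n) (Fin n) ℝ := 1 + G.adjMatrix ℝ with hMdef
  have hM : Mᵀ = M := by
    rw [hMdef, transpose_add, transpose_one, SimpleGraph.transpose_adjMatrix]
  suffices H : ∀ k, ∀ x : Fin n → ℝ, (∀ i, 0 ≤ x i) →
      (Finset.univ.filter fun i => x i ≠ 0).card = k →
      (∑ i, x i) ^ 2 ≤ a * (x ⬝ᵥ M.mulVec x) from H _ x hx rfl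
  intro k
  induction k using Nat.strong_induction_on with
  | _ k IH =>
    intro x hx hk
    set S := Finset.univ.filter fun i => x i ≠ 0 with hSdef
    by_cases hind : ∀ i ∈ S, ∀ j ∈ S, ¬ G.Adj i j
    · -- support independent
      have hcard : S.card ≤ a := ha S hind
      have h1 : ∑ i, x i = ∑ i ∈ S, x i := (Finset.sum_filter_ne_zero _).symm
      have h2 : (∑ i ∈ S, x i) ^ 2 ≤ (S.card : ℝ) * ∑ i ∈ S, x i ^ 2 :=
        sq_sum_le_card_mul_sum_sq
      have h3 : ∑ i ∈ S, x i ^ 2 ≤ ∑ i, x i ^ 2 :=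
        Finset.sum_le_sum_of_subset_of_nonneg (Finset.subset_univ S)
          (fun i _ _ => sq_nonneg _)
      have h4 := sumsq_le_form G x hx
      have h5 : (0:ℝ) ≤ ∑ i ∈ S, x i ^ 2 :=
        Finset.sum_nonneg fun i _ => sq_nonneg _
      calc (∑ i, x i) ^ 2 = (∑ i ∈ S, x i) ^ 2 := by rw [h1]
        _ ≤ (S.card : ℝ) * ∑ i ∈ S, x i ^ 2 := h2
        _ ≤ (a : ℝ) * ∑ i, x i ^ 2 := by
            apply mul_le_mul (by exact_mod_cast hcard) h3 h5 (by positivity)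
        _ ≤ a * (x ⬝ᵥ M.mulVec x) := by
            apply mul_le_mul_of_nonneg_left h4 (by positivity)
    · push_neg at hind
      obtain ⟨u, hu, v, hv, hadj⟩ := hind
      have main : ∀ u v : Fin n, u ∈ S → v ∈ S → G.Adj u v →
          (M.mulVec x) u ≤ (M.mulVec x) v →
          (∑ i, x i) ^ 2 ≤ a * (x ⬝ᵥ M.mulVec x) := by
        intro u v hu hv hadj hle
        have huv : u ≠ v := hadj.ne
        have hxv : x v ≠ 0 := by simpa [hSdef] using hv
        have hxu : x u ≠ 0 := by simpa [hSdef] using hu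
        set d : Fin n → ℝ := Pi.single u (1:ℝ) - Pi.single v (1:ℝ) with hd
        set y : Fin n → ℝ := x + (x v) • d with hy
        have hdu : d u = 1 := by simp [hd, Pi.sub_apply, Pi.single_apply, huv]
        have hdv : d v = -1 := by simp [hd, Pi.sub_apply, Pi.single_apply, huv.symm]
        have hdi : ∀ i, i ≠ u → i ≠ v → d i = 0 := by
          intro i hiu hiv; simp [hd, Pi.sub_apply, Pi.single_apply, hiu, hiv]
        have hyv : y v = 0 := by simp [hy, hdv]
        have hyu : y u = x u + x v := by simp [hy, hdu]
        have hyi : ∀ i, i ≠ u → i ≠ v → y i = x i := by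
          intro i hiu hiv; simp [hy, hdi i hiu hiv]
        have hy0 : ∀ i, 0 ≤ y i := by
          intro i
          rcases eq_or_ne i u with rfl | hiu
          · rw [hyu]; exact add_nonneg (hx _) (hx _)
          rcases eq_or_ne i v with rfl | hiv
          · rw [hyv]
          · rw [hyi i hiu hiv]; exact hx i
        have hsum : ∑ i, y i = ∑ i, x i := by
          have hds : ∑ i, d i = 0 := by
            simp [hd, Finset.sum_sub_distrib, Finset.sum_pi_single']
          simp [hy, Finset.sum_add_distrib, ← Finset.mul_sum, hds]
        -- d ⬝ᵥ M.mulVec w = (M.mulVec w) u - (M.mulVec w) v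
        have hdot : ∀ w : Fin n → ℝ, d ⬝ᵥ w = w u - w v := by
          intro w
          simp [hd, sub_dotProduct, single_dotProduct]
        have hMuu : M u u = 1 := by
          simp [hMdef, Matrix.one_apply, SimpleGraph.adjMatrix_apply]
        have hMvv : M v v = 1 := by
          simp [hMdef, Matrix.one_apply, SimpleGraph.adjMatrix_apply]
        have hMuv : M u v = 1 := by
          simp [hMdef, Matrix.one_apply, SimpleGraph.adjMatrix_apply, huv, hadj]
        have hMvu : M v u = 1 := by
          simp [hMdef, Matrix.one_apply, SimpleGraph.adjMatrix_apply, huv.symm, hadj.symm]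
        have hMd : ∀ i, (M.mulVec d) i = M i u - M i v := by
          intro i
          simp [hd, mulVec, dotProduct_sub, dotProduct_single]
        have hdMd : d ⬝ᵥ M.mulVec d = 0 := by
          rw [hdot, hMd, hMd, hMuu, hMuv, hMvu, hMvv]; ring
        have hdMx : d ⬝ᵥ M.mulVec x ≤ 0 := by
          rw [hdot]; linarith
        have hq : y ⬝ᵥ M.mulVec y ≤ x ⬝ᵥ M.mulVec x := by
          rw [hy, expand_form M hM x d (x v), hdMd]
          have hxv0 : 0 ≤ x v := hx v
          nlinarith
        -- support strictly decreases
        have hsub : (Finset.univ.filter fun i => y i ≠ 0) ⊆ S.erase v := by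
          intro i hi
          simp only [Finset.mem_filter, Finset.mem_univ, true_and] at hi
          have hiv : i ≠ v := by rintro rfl; exact hi hyv
          refine Finset.mem_erase.mpr ⟨hiv, ?_⟩
          simp only [hSdef, Finset.mem_filter, Finset.mem_univ, true_and]
          rcases eq_or_ne i u with rfl | hiu
          · exact hxu
          · rw [hyi i hiu hiv] at hi; exact hi
        have hlt : (Finset.univ.filter fun i => y i ≠ 0).card < k := by
          calc (Finset.univ.filter fun i => y i ≠ 0).card
              ≤ (S.erase v).card := Finset.card_le_card hsub
            _ < S.card := Finset.card_erase_lt_of_mem hv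
            _ = k := hk
        have hIH := IH _ hlt y hy0 rfl
        rw [hsum] at hIH
        refine hIH.trans ?_
        exact mul_le_mul_of_nonneg_left hq (by positivity)
      rcases le_total ((M.mulVec x) u) ((M.mulVec x) v) with h | h
      · exact main u v hu hv hadj h
      · exact main v u hv hu hadj.symm h

end aux

theorem stmt_4 {n : ℕ} (hn : 1 ≤ n) (G : SimpleGraph (Fin n)) [DecidableRel G.Adj]
    (t : ℕ) (ht : 1 ≤ t) (htn : t ≤ n)
    (Q : Matrix (Fin n) (Fin n) ℝ)
    (hQ : Q = ((t : ℝ) - 1 / 2) • (1 + G.adjMatrix ℝ) - Matrix.of (fun _ _ => (1 : ℝ)))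
    (δ : ℝ) (hδ : δ = 1 / (2 * (n : ℝ) + 1)) :
    (∃ x : Fin n → ℝ, (∀ i, 0 ≤ x i) ∧ Real.sqrt (∑ i, x i ^ 2) ≤ 1 ∧
        x ⬝ᵥ Q.mulVec x ≤ -δ / Real.sqrt n) ↔
      ∃ S : Finset (Fin n), S.card = t ∧ ∀ i ∈ S, ∀ j ∈ S, ¬ G.Adj i j := by
  have hδpos : 0 < δ := by
    rw [hδ]; positivity
  have hsn : 1 ≤ Real.sqrt n := by
    rw [show (1:ℝ) = Real.sqrt 1 from (Real.sqrt_one).symm]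
    exact Real.sqrt_le_sqrt (by exact_mod_cast hn)
  have hsn0 : 0 < Real.sqrt n := lt_of_lt_of_le one_pos hsn
  -- the quadratic form identity
  have hform : ∀ x : Fin n → ℝ, x ⬝ᵥ Q.mulVec x
      = ((t:ℝ) - 1/2) * (x ⬝ᵥ (1 + G.adjMatrix ℝ).mulVec x) - (∑ i, x i)^2 := by
    intro x
    rw [hQ, sub_mulVec, dotProduct_sub, smul_mulVec, dotProduct_smul, smul_eq_mul]
    congr 1
    have : ((Matrix.of fun _ _ => (1:ℝ)) : Matrix (Fin n) (Fin n) ℝ).mulVec x = fun _ => ∑ j, x j := by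
      funext i; simp [mulVec, dotProduct]
    rw [this]
    simp only [dotProduct]
    rw [← Finset.sum_mul, sq]
  constructor
  · rintro ⟨x, hx0, hxn1, hxQ⟩
    by_contra hno
    -- every independent set has card ≤ t - 1
    have ha : ∀ S : Finset (Fin n), (∀ i ∈ S, ∀ j ∈ S, ¬ G.Adj i j) → S.card ≤ t - 1 := by
      intro S hS
      by_contra hc
      push_neg at hc
      have htS : t ≤ S.card := by omega
      obtain ⟨T, hTS, hTcard⟩ := Finset.exists_subset_card_eq htS
      exact hno ⟨T, hTcard, fun i hi j hj => hS i (hTS hi) j (hTS hj)⟩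
    have hkey := ms_key G (t-1) ha x hx0
    have hcast : ((t - 1 : ℕ) : ℝ) = (t : ℝ) - 1 := by
      rw [Nat.cast_sub ht]; norm_num
    rw [hcast] at hkey
    have hq0 : 0 ≤ x ⬝ᵥ (1 + G.adjMatrix ℝ).mulVec x := by
      refine le_trans ?_ (sumsq_le_form G x hx0)
      exact Finset.sum_nonneg fun i _ => sq_nonneg _
    have heq := hform x
    have hneg : x ⬝ᵥ Q.mulVec x ≤ -(δ / Real.sqrt n) := by
      rwa [neg_div] at hxQ
    have hpos : 0 < δ / Real.sqrt n := div_pos hδpos hsn0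
    nlinarith [hkey, heq, hq0, hneg, hpos]
  · rintro ⟨S, hScard, hSind⟩
    have ht0 : (0:ℝ) < t := by exact_mod_cast ht
    refine ⟨fun i => if i ∈ S then (t:ℝ)⁻¹ else 0, ?_, ?_, ?_⟩
    · intro i; dsimp only; positivity
    · have hsum : ∑ i, (if i ∈ S then (t:ℝ)⁻¹ else 0) ^ 2 = (t:ℝ)⁻¹ := by
        have : ∀ i, (if i ∈ S then (t:ℝ)⁻¹ else 0) ^ 2
            = if i ∈ S then (t:ℝ)⁻¹^2 else 0 := by
          intro i; by_cases hi : i ∈ S <;> simp [hi]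
        rw [Finset.sum_congr rfl (fun i _ => this i), Finset.sum_ite_mem,
          Finset.univ_inter, Finset.sum_const, hScard]
        rw [nsmul_eq_mul, sq]
        field_simp
      rw [hsum]
      calc Real.sqrt (t:ℝ)⁻¹ ≤ Real.sqrt 1 := by
            apply Real.sqrt_le_sqrt
            rw [inv_le_one_iff₀]
            right
            exact_mod_cast ht
        _ = 1 := Real.sqrt_one
    · set x : Fin n → ℝ := fun i => if i ∈ S then (t:ℝ)⁻¹ else 0 with hxdef
      have hadjzero : x ⬝ᵥ (G.adjMatrix ℝ).mulVec x = 0 := by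
        simp only [mulVec, dotProduct]
        apply Finset.sum_eq_zero
        intro i _
        by_cases hi : i ∈ S
        · have h0 : (∑ j, G.adjMatrix ℝ i j * x j) = 0 := by
            apply Finset.sum_eq_zero
            intro j _
            by_cases hj : j ∈ S
            · simp [hxdef, hj, SimpleGraph.adjMatrix_apply, hSind i hi j hj]
            · simp [hxdef, hj]
          rw [h0, mul_zero]
        · simp [hxdef, hi]
      have hsumsq : ∑ i, x i ^ 2 = (t:ℝ)⁻¹ := by
        have h1 : ∀ i, x i ^ 2 = if i ∈ S then (t:ℝ)⁻¹^2 else 0 := by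
          intro i; by_cases hi : i ∈ S <;> simp [hxdef, hi]
        rw [Finset.sum_congr rfl (fun i _ => h1 i), Finset.sum_ite_mem,
          Finset.univ_inter, Finset.sum_const, hScard, nsmul_eq_mul, sq]
        field_simp
      have hsum1 : ∑ i, x i = 1 := by
        have : ∑ i, x i = ∑ i ∈ Finset.univ ∩ S, (t:ℝ)⁻¹ := by
          rw [← Finset.sum_ite_mem]
        rw [this, Finset.univ_inter, Finset.sum_const, hScard, nsmul_eq_mul]
        field_simp
      have hqval : x ⬝ᵥ (1 + G.adjMatrix ℝ).mulVec x = (t:ℝ)⁻¹ := by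
        rw [add_mulVec, dotProduct_add, one_mulVec, hadjzero, add_zero]
        simpa [dotProduct, sq] using hsumsq
      rw [hform x, hqval, hsum1]
      have hdiv : δ / Real.sqrt n ≤ δ := div_le_self hδpos.le hsn
      have hδle : δ ≤ 1 / (2 * (t:ℝ)) := by
        rw [hδ]
        apply one_div_le_one_div_of_le (by positivity)
        have : (t:ℝ) ≤ n := by exact_mod_cast htn
        linarith
      have heq : ((t:ℝ) - 1/2) * (t:ℝ)⁻¹ - 1^2 = -(1 / (2 * (t:ℝ))) := by
        field_simp
        ring
      rw [heq, neg_div]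
      have : δ / Real.sqrt n ≤ 1 / (2 * (t:ℝ)) := hdiv.trans hδle
      linarith
end

section
/- Let f : ℝⁿ → ℝ be twice differentiable with ρ-Lipschitz continuous Hessian, and let ρ̃ ≥ ρ with ρ̃ > 0. Let x ∈ ℝⁿ, and let d ∈ ℝⁿ and ψ ≥ 0 satisfy ‖d‖ ≤ 1, ⟨∇f(x), d⟩ ≤ 0, and dᵀ∇²f(x)d = −ψ. Then f(x + (2ψ/ρ̃) d) ≤ f(x) − 2ψ³/(3ρ̃²). -/
open scoped RealInnerProductSpace

lemma cubic_descent {n : ℕ} (f : EuclideanSpace ℝ (Fin n) → ℝ) (hf : ContDiff ℝ 2 f)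
    (ρ : ℝ)
    (hLip : ∀ u v : EuclideanSpace ℝ (Fin n),
      ‖iteratedFDeriv ℝ 2 f u - iteratedFDeriv ℝ 2 f v‖ ≤ ρ * ‖u - v‖)
    (x h : EuclideanSpace ℝ (Fin n)) :
    f (x + h) ≤ f x + fderiv ℝ f x h + (1/2) * iteratedFDeriv ℝ 2 f x ![h, h]
      + ρ / 6 * ‖h‖ ^ 3 := by
  have hfd : Differentiable ℝ f := hf.differentiable (by norm_num)
  have hfd1 : ContDiff ℝ 1 (fderiv ℝ f) := hf.fderiv_right (by norm_num)
  have hfd1' : Differentiable ℝ (fderiv ℝ f) := hfd1.differentiable (by norm_num)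
  -- line derivative
  have hline : ∀ t : ℝ, HasDerivAt (fun s : ℝ => x + s • h) h t := by
    intro t
    simpa using ((hasDerivAt_id t).smul_const h).const_add x
  set φ : ℝ → ℝ := fun t => f (x + t • h) with hφ
  set φ' : ℝ → ℝ := fun t => fderiv ℝ f (x + t • h) h with hφ'
  set φ'' : ℝ → ℝ := fun t => (fderiv ℝ (fderiv ℝ f) (x + t • h)) h h with hφ''
  have hDφ : ∀ t : ℝ, HasDerivAt φ (φ' t) t := by
    intro t
    exact ((hfd (x + t • h)).hasFDerivAt).comp_hasDerivAt t (hline t)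
  have hDφ' : ∀ t : ℝ, HasDerivAt φ' (φ'' t) t := by
    intro t
    have h1 : HasDerivAt (fun s : ℝ => fderiv ℝ f (x + s • h))
        (fderiv ℝ (fderiv ℝ f) (x + t • h) h) t :=
      ((hfd1' (x + t • h)).hasFDerivAt).comp_hasDerivAt t (hline t)
    simpa using h1.clm_apply (hasDerivAt_const t h)
  -- relate φ'' to iteratedFDeriv
  have hiter : ∀ t : ℝ, φ'' t = iteratedFDeriv ℝ 2 f (x + t • h) ![h, h] := by
    intro t
    rw [iteratedFDeriv_two_apply]
    simp [hφ'']
  have hQ0 : φ'' 0 = iteratedFDeriv ℝ 2 f x ![h, h] := by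
    simpa using hiter 0
  -- Lipschitz bound on φ''
  have hbound : ∀ t : ℝ, 0 ≤ t → φ'' t - φ'' 0 ≤ ρ * t * ‖h‖ ^ 3 := by
    intro t ht
    have h1 : φ'' t - φ'' 0
        = (iteratedFDeriv ℝ 2 f (x + t • h) - iteratedFDeriv ℝ 2 f x) ![h, h] := by
      rw [hiter t, hQ0]; rfl
    have h2 : |(iteratedFDeriv ℝ 2 f (x + t • h) - iteratedFDeriv ℝ 2 f x) ![h, h]|
        ≤ ‖iteratedFDeriv ℝ 2 f (x + t • h) - iteratedFDeriv ℝ 2 f x‖ * (‖h‖ * ‖h‖) := by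
      have := (iteratedFDeriv ℝ 2 f (x + t • h) - iteratedFDeriv ℝ 2 f x).le_opNorm ![h, h]
      simpa [Fin.prod_univ_two, Real.norm_eq_abs] using this
    have h3 : ‖iteratedFDeriv ℝ 2 f (x + t • h) - iteratedFDeriv ℝ 2 f x‖
        ≤ ρ * (t * ‖h‖) := by
      have := hLip (x + t • h) x
      simpa [norm_smul, abs_of_nonneg ht] using this
    calc φ'' t - φ'' 0 ≤ |(iteratedFDeriv ℝ 2 f (x + t • h) - iteratedFDeriv ℝ 2 f x) ![h, h]| := by
          rw [h1]; exact le_abs_self _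
      _ ≤ ‖iteratedFDeriv ℝ 2 f (x + t • h) - iteratedFDeriv ℝ 2 f x‖ * (‖h‖ * ‖h‖) := h2
      _ ≤ ρ * (t * ‖h‖) * (‖h‖ * ‖h‖) := by
          apply mul_le_mul_of_nonneg_right h3 (by positivity)
      _ = ρ * t * ‖h‖ ^ 3 := by ring
  -- comparison function
  set g : ℝ → ℝ := fun t => φ t - (φ 0 + t * φ' 0 + t^2/2 * φ'' 0 + ρ * ‖h‖^3 * t^3/6) with hg
  set g' : ℝ → ℝ := fun t => φ' t - (φ' 0 + t * φ'' 0 + ρ * ‖h‖^3 * t^2/2) with hg'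
  have hDg : ∀ t : ℝ, HasDerivAt g (g' t) t := by
    intro t
    have : HasDerivAt (fun t : ℝ => φ 0 + t * φ' 0 + t^2/2 * φ'' 0 + ρ * ‖h‖^3 * t^3/6)
        (φ' 0 + t * φ'' 0 + ρ * ‖h‖^3 * t^2/2) t := by
      have h1 : HasDerivAt (fun t : ℝ => φ 0 + t * φ' 0 + t^2/2 * φ'' 0 + ρ * ‖h‖^3 * t^3/6)
          (0 + (1 * φ' 0) + (2 * t^1 / 2 * φ'' 0) + ρ * ‖h‖^3 * (3 * t^2) / 6) t := by
        apply HasDerivAt.add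
        · apply HasDerivAt.add
          · exact (hasDerivAt_const t (φ 0)).add ((hasDerivAt_id t).mul_const (φ' 0))
          · have : HasDerivAt (fun t : ℝ => t^2/2) (2 * t^1 / 2) t :=
              (hasDerivAt_pow 2 t).div_const 2
            exact this.mul_const (φ'' 0)
        · have : HasDerivAt (fun t : ℝ => t^3) ((3:ℕ) * t^2) t := by
            simpa using hasDerivAt_pow 3 t
          exact (((this.const_mul (ρ * ‖h‖^3))).div_const 6)
      convert h1 using 1; push_cast; ring
    exact (hDφ t).sub this
  have hDg' : ∀ t : ℝ, HasDerivAt g' (φ'' t - (φ'' 0 + ρ * ‖h‖^3 * t)) t := by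
    intro t
    have h1 : HasDerivAt (fun t : ℝ => φ' 0 + t * φ'' 0 + ρ * ‖h‖^3 * t^2/2)
        (φ'' 0 + ρ * ‖h‖^3 * t) t := by
      have h2 : HasDerivAt (fun t : ℝ => φ' 0 + t * φ'' 0 + ρ * ‖h‖^3 * t^2/2)
          (0 + 1 * φ'' 0 + ρ * ‖h‖^3 * ((2:ℕ) * t^1) / 2) t := by
        apply HasDerivAt.add
        · exact (hasDerivAt_const t (φ' 0)).add ((hasDerivAt_id t).mul_const (φ'' 0))
        · exact ((hasDerivAt_pow 2 t).const_mul (ρ * ‖h‖^3)).div_const 2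
      convert h2 using 1; push_cast; ring
    exact (hDφ' t).sub h1
  -- g' ≤ 0 on [0,1] via antitone
  have hg'anti : AntitoneOn g' (Set.Icc 0 1) := by
    apply antitoneOn_of_deriv_nonpos (convex_Icc 0 1)
    · exact fun t _ => ((hDg' t).continuousAt).continuousWithinAt
    · exact fun t _ => ((hDg' t).differentiableAt).differentiableWithinAt
    · intro t ht
      rw [interior_Icc] at ht
      rw [(hDg' t).deriv]
      have := hbound t (le_of_lt ht.1)
      linarith
  have hg'0 : g' 0 = 0 := by simp [hg']
  have hg'nonpos : ∀ t ∈ Set.Icc (0:ℝ) 1, g' t ≤ 0 := by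
    intro t ht
    have := hg'anti (Set.left_mem_Icc.2 zero_le_one) ht ht.1
    rwa [hg'0] at this
  have hganti : AntitoneOn g (Set.Icc 0 1) := by
    apply antitoneOn_of_deriv_nonpos (convex_Icc 0 1)
    · exact fun t _ => ((hDg t).continuousAt).continuousWithinAt
    · exact fun t _ => ((hDg t).differentiableAt).differentiableWithinAt
    · intro t ht
      rw [interior_Icc] at ht
      rw [(hDg t).deriv]
      exact hg'nonpos t ⟨le_of_lt ht.1, le_of_lt ht.2⟩
  have hres := hganti (Set.left_mem_Icc.2 zero_le_one) (Set.right_mem_Icc.2 zero_le_one)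
      zero_le_one
  have hg0 : g 0 = 0 := by simp [hg]
  rw [hg0] at hres
  have hφ1 : φ 1 = f (x + h) := by simp [hφ]
  have hφ0 : φ 0 = f x := by simp [hφ]
  have hφ'0 : φ' 0 = fderiv ℝ f x h := by simp [hφ']
  have : g 1 = f (x + h) - (f x + fderiv ℝ f x h + (1/2) * iteratedFDeriv ℝ 2 f x ![h, h]
      + ρ / 6 * ‖h‖ ^ 3) := by
    simp only [hg, hφ1, hφ0, hφ'0, hQ0]; ring
  rw [this] at hres
  linarith

theorem stmt_12 {n : ℕ} (f : EuclideanSpace ℝ (Fin n) → ℝ) (hf : ContDiff ℝ 2 f)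
    (ρ ρt : ℝ)
    (hLip : ∀ u v : EuclideanSpace ℝ (Fin n),
      ‖iteratedFDeriv ℝ 2 f u - iteratedFDeriv ℝ 2 f v‖ ≤ ρ * ‖u - v‖)
    (hρρt : ρ ≤ ρt) (hρt : 0 < ρt)
    (x d : EuclideanSpace ℝ (Fin n)) (hd : ‖d‖ ≤ 1)
    (ψ : ℝ) (hψ : 0 ≤ ψ) (hdir : ⟪gradient f x, d⟫ ≤ 0)
    (hquad : iteratedFDeriv ℝ 2 f x ![d, d] = -ψ) :
    f (x + (2 * ψ / ρt) • d) ≤ f x - 2 * ψ ^ 3 / (3 * ρt ^ 2) := by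
  set t : ℝ := 2 * ψ / ρt with htdef
  have ht : 0 ≤ t := by positivity
  have key := cubic_descent f hf ρ hLip x (t • d)
  have hgrad : ⟪gradient f x, d⟫ = fderiv ℝ f x d := by
    rw [gradient, InnerProductSpace.toDual_symm_apply]
  have h1 : fderiv ℝ f x (t • d) = t * ⟪gradient f x, d⟫ := by
    rw [hgrad, (fderiv ℝ f x).map_smul]; rfl
  have h2 : iteratedFDeriv ℝ 2 f x ![t • d, t • d] = t ^ 2 * (-ψ) := by
    have hm : ![t • d, t • d] = fun i : Fin 2 => t • (![d, d] i) := by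
      funext i; fin_cases i <;> simp
    rw [hm, (iteratedFDeriv ℝ 2 f x).map_smul_univ (fun _ : Fin 2 => t) ![d, d], hquad]
    simp [pow_two, smul_eq_mul]
    try ring
  have h3 : ‖t • d‖ ^ 3 ≤ t ^ 3 := by
    have : ‖t • d‖ ≤ t := by
      rw [norm_smul, Real.norm_eq_abs, abs_of_nonneg ht]
      nlinarith [norm_nonneg d]
    exact pow_le_pow_left₀ (norm_nonneg _) this 3
  have h4 : ρ / 6 * ‖t • d‖ ^ 3 ≤ ρt / 6 * t ^ 3 := by
    calc ρ / 6 * ‖t • d‖ ^ 3 ≤ ρt / 6 * ‖t • d‖ ^ 3 := by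
          apply mul_le_mul_of_nonneg_right (by linarith) (by positivity)
      _ ≤ ρt / 6 * t ^ 3 := by
          apply mul_le_mul_of_nonneg_left h3 (by positivity)
  have h5 : t * ⟪gradient f x, d⟫ ≤ 0 := mul_nonpos_of_nonneg_of_nonpos ht hdir
  have harith : (1/2 : ℝ) * (t ^ 2 * (-ψ)) + ρt / 6 * t ^ 3
      = -(2 * ψ ^ 3 / (3 * ρt ^ 2)) := by
    rw [htdef]; field_simp; ring
  rw [h1, h2] at key
  linarith
end

section
/- Let f : ℝⁿ → ℝ be twice continuously differentiable and bounded below by f_min on a nonempty closed convex set F ⊆ ℝⁿ, let L̃, ρ̃ > 0, let ε_g > 0, and let (x_k)_{k≥0} be a sequence in F that satisfies, for every k, f(x_{k+1}) ≤ f(x_k) − max{ X(x_k)²/(2L̃), 2ψ(x_k)³/(3ρ̃²) }. Then the set G(ε_g) = { k ∈ ℕ : X(x_k) > ε_g } is finite and |G(ε_g)| ≤ 2L̃ (f(x₀) − f_min)/ε_g². -/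
open scoped RealInnerProductSpace

theorem stmt_16 {n : ℕ} (f : EuclideanSpace ℝ (Fin n) → ℝ) (hf : ContDiff ℝ 2 f)
    (F : Set (EuclideanSpace ℝ (Fin n))) (hFne : F.Nonempty) (hFcl : IsClosed F)
    (hFconv : Convex ℝ F) (fmin : ℝ) (hbdd : ∀ y ∈ F, fmin ≤ f y)
    (Lt ρt : ℝ) (hLt : 0 < Lt) (hρt : 0 < ρt)
    (x : ℕ → EuclideanSpace ℝ (Fin n)) (hxF : ∀ k, x k ∈ F)
    (hdec : ∀ k, f (x (k + 1)) ≤ f (x k) -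
      max (Xmeas f F (x k) ^ 2 / (2 * Lt)) (2 * psiMeas f F (x k) ^ 3 / (3 * ρt ^ 2))) (εg : ℝ) (hεg : 0 < εg) :
    {k : ℕ | εg < Xmeas f F (x k)}.Finite ∧
      ({k : ℕ | εg < Xmeas f F (x k)}.ncard : ℝ) ≤ 2 * Lt * (f (x 0) - fmin) / εg ^ 2 := by
  classical
  set P : ℕ → Prop := fun k => εg < Xmeas f F (x k) with hP
  set c : ℝ := εg ^ 2 / (2 * Lt) with hc
  have hcpos : 0 < c := by positivity
  have step : ∀ k, f (x (k + 1)) ≤ f (x k) - (if P k then c else 0) := by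
    intro k
    refine le_trans (hdec k) ?_
    have hXnn : 0 ≤ Xmeas f F (x k) := abs_nonneg _
    have hmax : (if P k then c else 0) ≤
        max (Xmeas f F (x k) ^ 2 / (2 * Lt)) (2 * psiMeas f F (x k) ^ 3 / (3 * ρt ^ 2)) := by
      split_ifs with h
      · refine le_trans ?_ (le_max_left _ _)
        have : εg ^ 2 ≤ Xmeas f F (x k) ^ 2 := by nlinarith [h]
        rw [hc, div_le_div_iff₀ (by positivity) (by positivity)]
        nlinarith
      · exact le_trans (by positivity) (le_max_left _ _)
    linarith
  have key : ∀ N, f (x N) ≤ f (x 0) - ((Finset.range N).filter P).card * c := by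
    intro N
    induction N with
    | zero => simp
    | succ N ih =>
      have hs := step N
      rw [Finset.range_add_one, Finset.filter_insert]
      split_ifs with h
      · rw [Finset.card_insert_of_notMem (by simp)]
        simp only [if_pos h] at hs
        push_cast
        linarith
      · simp only [if_neg h] at hs
        linarith
  have bound : ∀ N, (((Finset.range N).filter P).card : ℝ) * c ≤ f (x 0) - fmin := by
    intro N
    have h1 := hbdd (x N) (hxF N)
    have h2 := key N
    linarith
  have hsub : ∀ S : Finset ℕ, ↑S ⊆ {k | P k} → (S.card : ℝ) * c ≤ f (x 0) - fmin := by
    intro S hS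
    have hSle : S ⊆ (Finset.range (S.sup id + 1)).filter P := by
      intro k hk
      simp only [Finset.mem_filter, Finset.mem_range]
      exact ⟨Nat.lt_succ_of_le (Finset.le_sup (f := id) hk), hS hk⟩
    have hcard := Finset.card_le_card hSle
    refine le_trans ?_ (bound (S.sup id + 1))
    have : (S.card : ℝ) ≤ (((Finset.range (S.sup id + 1)).filter P).card : ℝ) := by
      exact_mod_cast hcard
    nlinarith
  have hfin : {k | P k}.Finite := by
    by_contra h
    have hinf : {k : ℕ | P k}.Infinite := h
    obtain ⟨S, hSsub, hScard⟩ :=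
      hinf.exists_subset_card_eq (Nat.ceil ((f (x 0) - fmin) / c) + 1)
    have hb := hsub S hSsub
    rw [hScard] at hb
    have hceil : (f (x 0) - fmin) / c ≤ (Nat.ceil ((f (x 0) - fmin) / c) : ℝ) :=
      Nat.le_ceil _
    have : ((Nat.ceil ((f (x 0) - fmin) / c) + 1 : ℕ) : ℝ) * c ≤ f (x 0) - fmin := hb
    push_cast at this
    rw [div_le_iff₀ hcpos] at hceil
    nlinarith
  have hb := hsub hfin.toFinset (by simp)
  constructor
  · exact hfin
  · have hεg2 : (0:ℝ) < εg ^ 2 := by positivity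
    rw [le_div_iff₀ hεg2]
    have : (hfin.toFinset.card : ℝ) * c ≤ f (x 0) - fmin := hb
    rw [hc] at this
    rw [Set.ncard_eq_toFinset_card _ hfin]
    have h2 : (hfin.toFinset.card : ℝ) * (εg ^ 2 / (2 * Lt)) ≤ f (x 0) - fmin := this
    rw [mul_div_assoc', div_le_iff₀ (by positivity)] at h2
    linarith
end

section
/- Let f : ℝⁿ → ℝ be twice continuously differentiable and bounded below by f_min on a nonempty closed convex set F ⊆ ℝⁿ, let L̃, ρ̃ > 0, let ε_g, ε_H > 0, and let (x_k)_{k≥0} be a sequence in F that satisfies, for every k, f(x_{k+1}) ≤ f(x_k) − max{ X(x_k)²/(2L̃), 2ψ(x_k)³/(3ρ̃²) }. Then the set G(ε_g) ∪ H(ε_H), where G(ε_g) = { k : X(x_k) > ε_g } and H(ε_H) = { k : ψ(x_k) > ε_H }, is finite with cardinality at most (f(x₀) − f_min) / min{ ε_g²/(2L̃), 2ε_H³/(3ρ̃²) }. -/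
open scoped RealInnerProductSpace

theorem stmt_17 {n : ℕ} (f : EuclideanSpace ℝ (Fin n) → ℝ) (hf : ContDiff ℝ 2 f)
    (F : Set (EuclideanSpace ℝ (Fin n))) (hFne : F.Nonempty) (hFcl : IsClosed F)
    (hFconv : Convex ℝ F) (fmin : ℝ) (hbdd : ∀ y ∈ F, fmin ≤ f y)
    (Lt ρt : ℝ) (hLt : 0 < Lt) (hρt : 0 < ρt)
    (x : ℕ → EuclideanSpace ℝ (Fin n)) (hxF : ∀ k, x k ∈ F)
    (hdec : ∀ k, f (x (k + 1)) ≤ f (x k) -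
      max (Xmeas f F (x k) ^ 2 / (2 * Lt)) (2 * psiMeas f F (x k) ^ 3 / (3 * ρt ^ 2))) (εg εH : ℝ) (hεg : 0 < εg) (hεH : 0 < εH) :
    ({k : ℕ | εg < Xmeas f F (x k)} ∪ {k : ℕ | εH < psiMeas f F (x k)}).Finite ∧
      (({k : ℕ | εg < Xmeas f F (x k)} ∪ {k : ℕ | εH < psiMeas f F (x k)}).ncard : ℝ) ≤
        (f (x 0) - fmin) / min (εg ^ 2 / (2 * Lt)) (2 * εH ^ 3 / (3 * ρt ^ 2)) := by

  set S := {k : ℕ | εg < Xmeas f F (x k)} ∪ {k : ℕ | εH < psiMeas f F (x k)} with hS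
  set c := min (εg ^ 2 / (2 * Lt)) (2 * εH ^ 3 / (3 * ρt ^ 2)) with hc
  have hc0 : 0 < c := by
    apply lt_min
    · positivity
    · positivity
  set m : ℕ → ℝ := fun k =>
    max (Xmeas f F (x k) ^ 2 / (2 * Lt)) (2 * psiMeas f F (x k) ^ 3 / (3 * ρt ^ 2)) with hm
  have hm0 : ∀ k, 0 ≤ m k := by
    intro k
    exact le_max_of_le_left (by positivity)
  have hmS : ∀ k ∈ S, c ≤ m k := by
    intro k hk
    rcases hk with hk | hk
    · refine le_trans (min_le_left _ _) (le_max_of_le_left ?_)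
      apply div_le_div_of_nonneg_right _ (by positivity)
      have h1 : 0 ≤ εg := hεg.le
      have h2 : 0 ≤ Xmeas f F (x k) := abs_nonneg _
      have h3 : εg < Xmeas f F (x k) := hk
      nlinarith
    · refine le_trans (min_le_right _ _) (le_max_of_le_right ?_)
      apply div_le_div_of_nonneg_right _ (by positivity)
      have h1 : 0 ≤ εH := hεH.le
      have h2 : 0 ≤ psiMeas f F (x k) := abs_nonneg _
      have h3 : εH < psiMeas f F (x k) := hk
      have h4 : εH ^ 3 ≤ psiMeas f F (x k) ^ 3 := pow_le_pow_left₀ h1 h3.le 3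
      linarith
  -- key: for any finset T ⊆ S, T.card * c ≤ f (x 0) - fmin
  have key : ∀ T : Finset ℕ, ↑T ⊆ S → (T.card : ℝ) * c ≤ f (x 0) - fmin := by
    intro T hT
    obtain ⟨N, hN⟩ : ∃ N, T ⊆ Finset.range N := by
      rcases T.exists_le with ⟨N, hN⟩
      exact ⟨N + 1, fun k hk => Finset.mem_range.mpr (Nat.lt_succ_of_le (hN k hk))⟩
    have tele : ∑ k ∈ Finset.range N, (f (x k) - f (x (k + 1))) = f (x 0) - f (x N) :=
      Finset.sum_range_sub' (fun k => f (x k)) N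
    have h1 : ∑ k ∈ T, c ≤ ∑ k ∈ T, m k :=
      Finset.sum_le_sum (fun k hk => hmS k (hT hk))
    have h2 : ∑ k ∈ T, m k ≤ ∑ k ∈ Finset.range N, m k :=
      Finset.sum_le_sum_of_subset_of_nonneg hN (fun k _ _ => hm0 k)
    have h3 : ∑ k ∈ Finset.range N, m k ≤ ∑ k ∈ Finset.range N, (f (x k) - f (x (k + 1))) := by
      apply Finset.sum_le_sum
      intro k _
      have := hdec k
      linarith
    have h4 : f (x 0) - f (x N) ≤ f (x 0) - fmin := by
      have := hbdd (x N) (hxF N)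
      linarith
    have : (T.card : ℝ) * c = ∑ k ∈ T, c := by
      rw [Finset.sum_const, nsmul_eq_mul]
    rw [this]
    calc ∑ k ∈ T, c ≤ ∑ k ∈ Finset.range N, (f (x k) - f (x (k + 1))) := by linarith
      _ = f (x 0) - f (x N) := tele
      _ ≤ f (x 0) - fmin := h4
  have hfin : S.Finite := by
    by_contra hinf
    have hinf2 : S.Infinite := hinf
    obtain ⟨T, hTS, hTcard⟩ :=
      hinf2.exists_subset_card_eq (Nat.floor ((f (x 0) - fmin) / c) + 1)
    have := key T hTS
    rw [hTcard] at this
    have hle : (f (x 0) - fmin) / c < (Nat.floor ((f (x 0) - fmin) / c) + 1 : ℝ) :=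
      Nat.lt_floor_add_one _
    have : ((Nat.floor ((f (x 0) - fmin) / c) + 1 : ℕ) : ℝ) ≤ (f (x 0) - fmin) / c :=
      (le_div_iff₀ hc0).mpr this
    push_cast at this
    linarith
  refine ⟨hfin, ?_⟩
  have := key hfin.toFinset (by simp)
  rw [Set.ncard_eq_toFinset_card S hfin]
  exact (le_div_iff₀ hc0).mpr this
end
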